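/- Let n ≥ 3 and let w₁, …, wₙ ∈ ℝ² satisfy ∑ᵢ wᵢ = 0 and ∑ᵢ |wᵢ| = 2. Set zᵢ = |wᵢ| − 2/n and define the symmetric n×n matrix G by G_{ij} = ⟨wᵢ, wⱼ⟩ − zᵢ zⱼ. Then: (i) G has at most 2 positive eigenvalues; (ii) tr G = 4/n; (iii) G𝟏 = 0, where 𝟏 is the all-ones vector; and consequently (iv) the largest eigenvalue of G satisfies λ₁(G) ≥ 2/n. -/

import Mathlib

open Matrix Finset

/-- Euclidean norm on ℝ². -/
noncomputable def enorm2 (v : Fin 2 → ℝ) : ℝ := Real.sqrt (v 0 ^ 2 + v 1 ^ 2)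

/-- Euclidean inner product on ℝ². -/
def inner2 (u v : Fin 2 → ℝ) : ℝ := u 0 * v 0 + u 1 * v 1

/-- The square of a vector in ℝ², defined as for complex numbers:
`(ξ, η) ↦ (ξ² − η², 2ξη)`. -/
def vsq (v : Fin 2 → ℝ) : Fin 2 → ℝ := ![v 0 ^ 2 - v 1 ^ 2, 2 * v 0 * v 1]

/-- The largest singular value of a 2×2 real matrix (explicit closed form:
the singular values squared are the eigenvalues of `BᵀB`, which has trace
`tr(BᵀB)` and determinant `det(B)²`). -/
noncomputable def sigma1 (B : Matrix (Fin 2) (Fin 2) ℝ) : ℝ :=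
  Real.sqrt (((Bᵀ * B).trace + Real.sqrt ((Bᵀ * B).trace ^ 2 - 4 * B.det ^ 2)) / 2)

/-- The smallest singular value of a 2×2 real matrix. -/
noncomputable def sigma2 (B : Matrix (Fin 2) (Fin 2) ℝ) : ℝ :=
  Real.sqrt (((Bᵀ * B).trace - Real.sqrt ((Bᵀ * B).trace ^ 2 - 4 * B.det ^ 2)) / 2)

/-- The 2×2 submatrix of an n×2 matrix formed by rows `i` and `j`. -/
def rowPair {n : ℕ} (A : Matrix (Fin n) (Fin 2) ℝ) (i j : Fin n) :
    Matrix (Fin 2) (Fin 2) ℝ :=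
  !![A i 0, A i 1; A j 0, A j 1]

/-- Quadratic form of `G`. -/
lemma quad_form (n : ℕ) (w : Fin n → Fin 2 → ℝ) (z : Fin n → ℝ)
    (G : Matrix (Fin n) (Fin n) ℝ)
    (hGdef : ∀ i j, G i j = inner2 (w i) (w j) - z i * z j) (x : Fin n → ℝ) :
    x ⬝ᵥ (G *ᵥ x) =
      (∑ i, x i * w i 0) ^ 2 + (∑ i, x i * w i 1) ^ 2 - (∑ i, x i * z i) ^ 2 := by
  rw [pow_two, pow_two, pow_two, Finset.sum_mul_sum, Finset.sum_mul_sum,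
    Finset.sum_mul_sum, ← Finset.sum_add_distrib, ← Finset.sum_sub_distrib]
  simp only [dotProduct, mulVec, hGdef, inner2, Finset.mul_sum]
  refine Finset.sum_congr rfl fun i _ => ?_
  rw [← Finset.sum_add_distrib, ← Finset.sum_sub_distrib]
  exact Finset.sum_congr rfl fun j _ => by ring

/-- properties of the matrix `G = WWᵀ − zzᵀ`. -/
theorem G_matrix_properties (n : ℕ) (hn : 3 ≤ n) (w : Fin n → Fin 2 → ℝ)
    (hsum : ∑ i, w i = 0) (hper : ∑ i, enorm2 (w i) = 2)
    (z : Fin n → ℝ) (hz : ∀ i, z i = enorm2 (w i) - 2 / n)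
    (G : Matrix (Fin n) (Fin n) ℝ)
    (hGdef : ∀ i j, G i j = inner2 (w i) (w j) - z i * z j)
    (hG : G.IsHermitian) :
    (Finset.univ.filter (fun i : Fin n => 0 < hG.eigenvalues i)).card ≤ 2 ∧
    G.trace = 4 / n ∧
    G *ᵥ (fun _ => 1) = 0 ∧
    ∃ i : Fin n, 2 / (n : ℝ) ≤ hG.eigenvalues i := by
  have hn0 : (0 : ℝ) < n := by positivity
  have hnne : (n : ℝ) ≠ 0 := ne_of_gt hn0
  -- the norm squared is the inner product with itself
  have hnorm : ∀ i, enorm2 (w i) ^ 2 = inner2 (w i) (w i) := by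
    intro i
    have h0 : (0:ℝ) ≤ w i 0 ^ 2 + w i 1 ^ 2 := by positivity
    simp only [enorm2, inner2, ← pow_two]
    rw [Real.sq_sqrt h0]
  -- trace
  have htrace : G.trace = 4 / n := by
    have : ∀ i, G i i = 4 / n * enorm2 (w i) - 4 / n ^ 2 := by
      intro i
      rw [hGdef, hz, ← hnorm]
      ring
    rw [Matrix.trace]
    simp only [Matrix.diag, this]
    rw [Finset.sum_sub_distrib, ← Finset.mul_sum, hper, Finset.sum_const, card_univ,
      Fintype.card_fin, nsmul_eq_mul]
    field_simp
    ring
  -- sum of z is 0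
  have hzsum : ∑ i, z i = 0 := by
    simp only [hz]
    rw [Finset.sum_sub_distrib, hper, Finset.sum_const, card_univ, Fintype.card_fin,
      nsmul_eq_mul]
    field_simp
    ring
  -- column sums of w are 0
  have hwsum : ∀ a, ∑ i, w i a = 0 := by
    intro a
    have := congrFun hsum a
    simpa [Finset.sum_apply] using this
  -- G 1 = 0
  have hG1 : G *ᵥ (fun _ => 1) = 0 := by
    funext i
    simp only [Matrix.mulVec, dotProduct, hGdef, inner2, mul_one, Pi.zero_apply]
    rw [Finset.sum_sub_distrib, Finset.sum_add_distrib, ← Finset.mul_sum, ← Finset.mul_sum,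
      ← Finset.mul_sum, hwsum 0, hwsum 1, hzsum]
    ring
  -- eigenvector basis
  set v : Fin n → (Fin n → ℝ) := fun k => ⇑(hG.eigenvectorBasis k) with hv
  have horth : ∀ k l : Fin n, v k ⬝ᵥ v l = if k = l then 1 else 0 := by
    intro k l
    have h := (orthonormal_iff_ite (𝕜 := ℝ)).mp hG.eigenvectorBasis.orthonormal k l
    rw [PiLp.inner_apply] at h
    simpa [dotProduct, RCLike.inner_apply, mul_comm] using h
  have hGv : ∀ k : Fin n, G *ᵥ v k = hG.eigenvalues k • v k := fun k =>
    hG.mulVec_eigenvectorBasis k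
  set S := Finset.univ.filter (fun i : Fin n => 0 < hG.eigenvalues i) with hS
  -- at most two positive eigenvalues
  have hcard : S.card ≤ 2 := by
    by_contra hc
    push_neg at hc
    let M : Matrix (Fin 2) S ℝ := fun a k => ∑ i, v k.1 i * w i a
    have hnotinj : ¬ Function.Injective M.mulVecLin := by
      intro hinj
      have hle := LinearMap.finrank_le_finrank_of_injective hinj
      rw [Module.finrank_fintype_fun_eq_card, Module.finrank_fintype_fun_eq_card] at hle
      simp only [Fintype.card_coe, Fintype.card_fin] at hle
      omega
    have hker : LinearMap.ker M.mulVecLin ≠ ⊥ := by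
      intro h
      exact hnotinj (LinearMap.ker_eq_bot.mp h)
    obtain ⟨c, hc0, hcne⟩ := Submodule.exists_mem_ne_zero_of_ne_bot hker
    rw [LinearMap.mem_ker] at hc0
    set x : Fin n → ℝ := fun i => ∑ k : S, c k * v k.1 i with hx
    -- W^T x = 0
    have hWx : ∀ a, ∑ i, x i * w i a = 0 := by
      intro a
      have h := congrFun hc0 a
      simp only [Matrix.mulVecLin_apply, Matrix.mulVec, dotProduct, Pi.zero_apply, M] at h
      calc ∑ i, x i * w i a = ∑ i, ∑ k : S, c k * v k.1 i * w i a := by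
            simp only [hx, Finset.sum_mul]
        _ = ∑ k : S, ∑ i, c k * v k.1 i * w i a := Finset.sum_comm
        _ = ∑ k : S, (∑ i, v k.1 i * w i a) * c k := by
            refine Finset.sum_congr rfl fun k _ => ?_
            rw [Finset.sum_mul]
            exact Finset.sum_congr rfl fun i _ => by ring
        _ = 0 := h
    -- quadratic form is nonpositive
    have hneg : x ⬝ᵥ (G *ᵥ x) ≤ 0 := by
      rw [quad_form n w z G hGdef x, hWx 0, hWx 1]
      nlinarith [sq_nonneg (∑ i, x i * z i)]
    -- quadratic form is positive
    have hGx : G *ᵥ x = ∑ k : S, (c k * hG.eigenvalues k.1) • v k.1 := by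
      have hx' : x = ∑ k : S, c k • v k.1 := by
        funext i
        simp [hx, Finset.sum_apply]
      rw [hx', ← Matrix.mulVecLin_apply, map_sum]
      refine Finset.sum_congr rfl fun k _ => ?_
      rw [_root_.map_smul, Matrix.mulVecLin_apply, hGv, smul_smul]
    have hxv : ∀ l : S, x ⬝ᵥ v l.1 = c l := by
      intro l
      calc x ⬝ᵥ v l.1 = ∑ k : S, c k * (v k.1 ⬝ᵥ v l.1) := by
            simp only [dotProduct, hx, Finset.sum_mul]
            rw [Finset.sum_comm]
            exact Finset.sum_congr rfl fun k _ => by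
              rw [Finset.mul_sum]
              exact Finset.sum_congr rfl fun i _ => by ring
        _ = c l := by
            simp only [horth, Subtype.coe_inj, mul_ite, mul_one, mul_zero]
            rw [Finset.sum_ite_eq' Finset.univ l c]
            simp
    have hqval : x ⬝ᵥ (G *ᵥ x) = ∑ k : S, hG.eigenvalues k.1 * c k ^ 2 := by
      rw [hGx]
      calc x ⬝ᵥ (∑ k : S, (c k * hG.eigenvalues k.1) • v k.1)
          = ∑ k : S, (c k * hG.eigenvalues k.1) * (x ⬝ᵥ v k.1) := by
            simp only [dotProduct, Finset.sum_apply, Pi.smul_apply, smul_eq_mul,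
              Finset.mul_sum]
            rw [Finset.sum_comm]
            refine Finset.sum_congr rfl fun k _ => ?_
            exact Finset.sum_congr rfl fun i _ => by ring
        _ = ∑ k : S, hG.eigenvalues k.1 * c k ^ 2 := by
            refine Finset.sum_congr rfl fun k _ => ?_
            rw [hxv k]
            ring
    have hpos : 0 < x ⬝ᵥ (G *ᵥ x) := by
      rw [hqval]
      obtain ⟨k, hk⟩ := Function.ne_iff.mp hcne
      refine Finset.sum_pos' (fun l _ => ?_) ⟨k, Finset.mem_univ k, ?_⟩
      · have hl : 0 < hG.eigenvalues l.1 := (Finset.mem_filter.mp l.2).2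
        positivity
      · have hkpos : 0 < hG.eigenvalues k.1 := (Finset.mem_filter.mp k.2).2
        have : c k ≠ 0 := by simpa using hk
        positivity
    linarith
  refine ⟨hcard, htrace, hG1, ?_⟩
  -- trace = sum of eigenvalues
  have htr2 : G.trace = ∑ i, hG.eigenvalues i := by
    conv_lhs => rw [hG.spectral_theorem]
    rw [Unitary.conjStarAlgAut_apply]
    rw [Matrix.trace_mul_cycle]
    rw [show (star (hG.eigenvectorUnitary : Matrix (Fin n) (Fin n) ℝ)) *
        (hG.eigenvectorUnitary : Matrix (Fin n) (Fin n) ℝ) = 1 from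
      Unitary.coe_star_mul_self hG.eigenvectorUnitary]
    rw [Matrix.one_mul, Matrix.trace_diagonal]
    simp
  -- find maximal eigenvalue
  obtain ⟨i0, -, hi0⟩ := Finset.exists_max_image Finset.univ (fun i => hG.eigenvalues i)
    ⟨⟨0, by omega⟩, Finset.mem_univ _⟩
  refine ⟨i0, ?_⟩
  have hi0' : ∀ i, hG.eigenvalues i ≤ hG.eigenvalues i0 := fun i => hi0 i (Finset.mem_univ i)
  have hi0nn : 0 ≤ hG.eigenvalues i0 := by
    by_contra h
    push_neg at h
    have : ∑ i, hG.eigenvalues i ≤ ∑ _i : Fin n, hG.eigenvalues i0 :=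
      Finset.sum_le_sum fun i _ => hi0' i
    rw [Finset.sum_const, card_univ, Fintype.card_fin, nsmul_eq_mul] at this
    have h4 : (0:ℝ) < 4 / n := by positivity
    nlinarith [htrace, htr2]
  have hsplit : ∑ i ∈ S, hG.eigenvalues i + ∑ i ∈ Finset.univ.filter
      (fun i => ¬ 0 < hG.eigenvalues i), hG.eigenvalues i = ∑ i, hG.eigenvalues i :=
    Finset.sum_filter_add_sum_filter_not _ _ _
  have hnonpos : ∑ i ∈ Finset.univ.filter (fun i => ¬ 0 < hG.eigenvalues i),
      hG.eigenvalues i ≤ 0 := by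
    refine Finset.sum_nonpos fun i hi => ?_
    have := (Finset.mem_filter.mp hi).2
    linarith [le_of_not_gt this]
  have hSbound : ∑ i ∈ S, hG.eigenvalues i ≤ 2 * hG.eigenvalues i0 := by
    calc ∑ i ∈ S, hG.eigenvalues i ≤ ∑ _i ∈ S, hG.eigenvalues i0 :=
          Finset.sum_le_sum fun i _ => hi0' i
      _ = S.card * hG.eigenvalues i0 := by rw [Finset.sum_const, nsmul_eq_mul]
      _ ≤ 2 * hG.eigenvalues i0 := by
          have : (S.card : ℝ) ≤ 2 := by exact_mod_cast hcard
          nlinarith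
  have h4 : (4:ℝ) / n = ∑ i, hG.eigenvalues i := by rw [← htr2, htrace]
  have : (4:ℝ) / n ≤ 2 * hG.eigenvalues i0 := by linarith
  have h2 : (2:ℝ) / n = (4 / n) / 2 := by ring
  linarith
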